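/- Let V be a linear subspace of ℝ^D, let y ∈ ℝ^D, let P ⊆ V + y be a nonempty polytope, let F be a nonempty face of P, and let L be the linear subspace of directions of the affine span of F. Then the linear span of the normal cone ncone_V(F,P) equals the orthogonal complement of L inside V; in particular, the dimension of ncone_V(F,P) (i.e., of its linear span) equals dim V − dim F. -/

import Mathlib

open scoped RealInnerProductSpace

/-- A polytope: convex hull of a nonempty finite set of points. -/
def IsPolytope {D : ℕ} (P : Set (EuclideanSpace ℝ (Fin D))) : Prop :=
  ∃ V : Finset (EuclideanSpace ℝ (Fin D)), V.Nonempty ∧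
    P = convexHull ℝ (V : Set (EuclideanSpace ℝ (Fin D)))

/-- `F` is a (nonempty, exposed) face of `P`: the set of maximizers over `P` of some
linear functional. -/
def IsFaceOf {D : ℕ} (F P : Set (EuclideanSpace ℝ (Fin D))) : Prop :=
  F.Nonempty ∧ ∃ c : EuclideanSpace ℝ (Fin D), F = {x ∈ P | ∀ y ∈ P, ⟪c, y⟫ ≤ ⟪c, x⟫}

lemma exists_pos_le_finset {α : Type*} [DecidableEq α] (T : Finset α) (g : α → ℝ)
    (hg : ∀ s ∈ T, 0 < g s) : ∃ ε : ℝ, 0 < ε ∧ ∀ s ∈ T, ε ≤ g s := by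
  classical
  induction T using Finset.induction_on with
  | empty => exact ⟨1, one_pos, by simp⟩
  | @insert a t ha ih =>
    obtain ⟨ε, hε, hle⟩ := ih (fun s hs => hg s (Finset.mem_insert_of_mem hs))
    refine ⟨min ε (g a), lt_min hε (hg a (Finset.mem_insert_self _ _)), ?_⟩
    intro s hs
    rcases Finset.mem_insert.1 hs with rfl | hs
    · exact min_le_right _ _
    · exact le_trans (min_le_left _ _) (hle s hs)

/-- The normal cone of `P` at `F` with respect to `V`:
`{u ∈ V : ⟨u,p⟩ ≥ ⟨u,q⟩ for all p ∈ F, q ∈ P}`. -/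
def nconeV {D : ℕ} (V : Submodule ℝ (EuclideanSpace ℝ (Fin D)))
    (F P : Set (EuclideanSpace ℝ (Fin D))) : Set (EuclideanSpace ℝ (Fin D)) :=
  {u | u ∈ V ∧ ∀ p ∈ F, ∀ q ∈ P, ⟪u, q⟫ ≤ ⟪u, p⟫}

/-- The linear span of the normal cone `ncone_V(F,P)` equals the orthogonal complement
(inside `V`) of the direction space `L` of the affine span of `F`; in particular its
dimension is `dim V − dim F`. -/
theorem ncone_spans_orthogonal_complement {D : ℕ}
    (V : Submodule ℝ (EuclideanSpace ℝ (Fin D))) (y : EuclideanSpace ℝ (Fin D))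
    (P : Set (EuclideanSpace ℝ (Fin D))) (hP : IsPolytope P)
    (hPV : ∀ x ∈ P, x - y ∈ V)
    (F : Set (EuclideanSpace ℝ (Fin D))) (hF : IsFaceOf F P) :
    Submodule.span ℝ (nconeV V F P) = (vectorSpan ℝ F)ᗮ ⊓ V ∧
    Module.finrank ℝ (Submodule.span ℝ (nconeV V F P)) =
      Module.finrank ℝ V - Module.finrank ℝ (vectorSpan ℝ F) := by
  obtain ⟨S, hSne, hPS⟩ := hP
  obtain ⟨hFne, c, hFc⟩ := hF
  set c' : EuclideanSpace ℝ (Fin D) := (V.orthogonalProjection c : EuclideanSpace ℝ (Fin D))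
    with hc'def
  have hc'V : c' ∈ V := (V.orthogonalProjection c).2
  have hcc' : ∀ v ∈ V, ⟪c - c', v⟫ = 0 := fun v hv =>
    Submodule.starProjection_inner_eq_zero c v hv
  have hkey : ∀ x ∈ P, ⟪c, x⟫ - ⟪c', x⟫ = ⟪c - c', y⟫ := by
    intro x hx
    have h1 : ⟪c - c', x - y⟫ = 0 := hcc' _ (hPV x hx)
    rw [inner_sub_left, inner_sub_right, inner_sub_right] at h1
    rw [inner_sub_left]
    linarith
  have hFc' : F = {x ∈ P | ∀ q ∈ P, ⟪c', q⟫ ≤ ⟪c', x⟫} := by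
    rw [hFc]
    ext x
    simp only [Set.mem_setOf_eq]
    constructor
    · rintro ⟨hx, hmax⟩
      exact ⟨hx, fun q hq => by
        have := hmax q hq; have h1 := hkey x hx; have h2 := hkey q hq; linarith⟩
    · rintro ⟨hx, hmax⟩
      exact ⟨hx, fun q hq => by
        have := hmax q hq; have h1 := hkey x hx; have h2 := hkey q hq; linarith⟩
  have hFmem : ∀ p ∈ F, p ∈ P ∧ ∀ q ∈ P, ⟪c', q⟫ ≤ ⟪c', p⟫ := by
    intro p hp; rw [hFc'] at hp; exact hp
  have hFP : F ⊆ P := fun x hx => (hFmem x hx).1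
  have hSP : (S : Set (EuclideanSpace ℝ (Fin D))) ⊆ P := hPS ▸ subset_convexHull ℝ _
  have hc'ncone : c' ∈ nconeV V F P :=
    ⟨hc'V, fun p hp q hq => (hFmem p hp).2 q hq⟩
  have hstrict : ∀ q ∈ P, q ∉ F → ∀ p ∈ F, ⟪c', q⟫ < ⟪c', p⟫ := by
    intro q hq hqF p hp
    rcases lt_or_eq_of_le ((hFmem p hp).2 q hq) with h | h
    · exact h
    · exfalso
      apply hqF
      rw [hFc']
      exact ⟨hq, fun r hr => h ▸ (hFmem p hp).2 r hr⟩
  obtain ⟨p0, hp0⟩ := hFne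
  have hFm : ∀ p ∈ F, ⟪c', p⟫ = ⟪c', p0⟫ := fun p hp =>
    le_antisymm ((hFmem p0 hp0).2 p (hFP hp)) ((hFmem p hp).2 p0 (hFP hp0))
  set m : ℝ := ⟪c', p0⟫ with hmdef
  have hLsub : vectorSpan ℝ F ≤ V := by
    rw [vectorSpan_def, Submodule.span_le]
    rintro v ⟨p, hp, p', hp', rfl⟩
    show p -ᵥ p' ∈ (V : Set (EuclideanSpace ℝ (Fin D)))
    have heq : p -ᵥ p' = (p - y) - (p' - y) := by rw [vsub_eq_sub]; abel
    rw [heq]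
    exact sub_mem (hPV p (hFP hp)) (hPV p' (hFP hp'))
  -- ⊆ direction
  have hle : Submodule.span ℝ (nconeV V F P) ≤ (vectorSpan ℝ F)ᗮ ⊓ V := by
    rw [Submodule.span_le]
    rintro u ⟨huV, hu⟩
    refine ⟨?_, huV⟩
    have hvs : vectorSpan ℝ F ≤ (Submodule.span ℝ {u})ᗮ := by
      rw [vectorSpan_def, Submodule.span_le]
      rintro v ⟨p, hp, p', hp', rfl⟩
      show p -ᵥ p' ∈ ((Submodule.span ℝ {u})ᗮ : Submodule ℝ _)
      rw [Submodule.mem_orthogonal]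
      intro x hx
      obtain ⟨a, rfl⟩ := Submodule.mem_span_singleton.1 hx
      have h1 : ⟪u, p -ᵥ p'⟫ = 0 := by
        have h2 := hu p hp p' (hFP hp')
        have h3 := hu p' hp' p (hFP hp)
        rw [vsub_eq_sub, inner_sub_right]
        linarith
      rw [real_inner_smul_left, h1, mul_zero]
    have h2 := Submodule.orthogonal_le hvs
    exact h2 (Submodule.le_orthogonal_orthogonal _ (Submodule.mem_span_singleton_self u))
  -- ⊇ direction
  have hge : (vectorSpan ℝ F)ᗮ ⊓ V ≤ Submodule.span ℝ (nconeV V F P) := by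
    intro w hw
    obtain ⟨hwL, hwV⟩ := hw
    have hwF : ∀ p ∈ F, ⟪w, p⟫ = ⟪w, p0⟫ := by
      intro p hp
      have hmem : p -ᵥ p0 ∈ vectorSpan ℝ F := vsub_mem_vectorSpan ℝ hp hp0
      have h0 := (Submodule.mem_orthogonal _ _).1 hwL _ hmem
      rw [vsub_eq_sub, inner_sub_left] at h0
      have e1 := real_inner_comm p w
      have e2 := real_inner_comm p0 w
      linarith
    classical
    have hex : ∃ ε : ℝ, 0 < ε ∧ ∀ s ∈ S, s ∉ F →
        ε ≤ (m - ⟪c', s⟫) / (|⟪w, s⟫ - ⟪w, p0⟫| + 1) := by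
      obtain ⟨ε, hε, hle'⟩ := exists_pos_le_finset (S.filter (fun s => ¬ s ∈ F))
        (fun s => (m - ⟪c', s⟫) / (|⟪w, s⟫ - ⟪w, p0⟫| + 1)) (by
          intro s hs
          rw [Finset.mem_filter] at hs
          have hδ : 0 < m - ⟪c', s⟫ := by
            have := hstrict s (hSP hs.1) hs.2 p0 hp0
            linarith
          positivity)
      exact ⟨ε, hε, fun s hs hsF => hle' s (Finset.mem_filter.2 ⟨hs, hsF⟩)⟩
    obtain ⟨ε, hε0, hεle⟩ := hex
    set u : EuclideanSpace ℝ (Fin D) := c' + ε • w with hudef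
    have huncone : u ∈ nconeV V F P := by
      refine ⟨Submodule.add_mem V hc'V (Submodule.smul_mem V ε hwV), fun p hp q hq => ?_⟩
      have hup : ⟪u, p⟫ = m + ε * ⟪w, p0⟫ := by
        rw [hudef, inner_add_left, real_inner_smul_left, hFm p hp, hwF p hp]
      rw [hup]
      have hhalf : P ⊆ {x | ⟪u, x⟫ ≤ m + ε * ⟪w, p0⟫} := by
        rw [hPS]
        apply convexHull_min
        · intro s hs
          simp only [Set.mem_setOf_eq, hudef, inner_add_left, real_inner_smul_left]
          by_cases hsF : s ∈ F
          · rw [hFm s hsF, hwF s hsF]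
          · have hδ : 0 < m - ⟪c', s⟫ := by
              have := hstrict s (hSP hs) hsF p0 hp0
              linarith
            set a : ℝ := ⟪w, s⟫ - ⟪w, p0⟫ with hadef
            have h1 : ε * (|a| + 1) ≤ m - ⟪c', s⟫ := by
              have hd := hεle s hs hsF
              rw [le_div_iff₀ (by positivity)] at hd
              linarith
            have h2 : a ≤ |a| := le_abs_self a
            nlinarith [hε0]
        · exact convex_halfSpace_le
            ⟨fun a b => inner_add_right u a b, fun r a => real_inner_smul_right u a r⟩ _
      exact hhalf hq
    have hwrep : w = ε⁻¹ • (u - c') := by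
      rw [hudef, add_sub_cancel_left, smul_smul, inv_mul_cancel₀ hε0.ne', one_smul]
    rw [hwrep]
    exact Submodule.smul_mem _ _ (Submodule.sub_mem _ (Submodule.subset_span huncone)
      (Submodule.subset_span hc'ncone))
  have heq : Submodule.span ℝ (nconeV V F P) = (vectorSpan ℝ F)ᗮ ⊓ V :=
    le_antisymm hle hge
  refine ⟨heq, ?_⟩
  have hrank := Submodule.finrank_add_inf_finrank_orthogonal hLsub
  rw [heq]
  omega
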